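/- Conversely to the greedy correctness: if the greedy strategy fails — i.e., at some stage positions 1..r are covered with r < n and no position i ≤ r+1 has an occurrence of a dictionary string starting at i and ending at position ≥ r+1 — then no valid decomposition of t from the dictionary exists. -/
import Mathlib


/-- A valid decomposition of the text `t` from the dictionary `s^1,…,s^m`. -/
def ValidDecomposition {α : Type*} {m : ℕ} (t : List α) (s : Fin m → List α) : Prop :=
  ∃ (z : ℕ) (idx : ℕ → Fin m) (q : ℕ → ℕ),
    0 < z ∧ q 0 = 1 ∧ q (z - 1) = t.length - (s (idx (z - 1))).length + 1 ∧
    (∀ j, 0 < j → j < z → q j ≤ q (j - 1) + (s (idx (j - 1))).length) ∧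
    (∀ j < z, (t.drop (q j - 1)).take (s (idx j)).length = s (idx j))

theorem stmt11 {α : Type*} (n m : ℕ) (t : List α) (ht : t.length = n)
    (s : Fin m → List α) (r : ℕ) (hr : r < n)
    (hno : ∀ i, 1 ≤ i → i ≤ r + 1 → ∀ j : Fin m,
      (t.drop (i - 1)).take (s j).length = s j → i + (s j).length - 1 < r + 1) :
    ¬ ValidDecomposition t s := by
  rintro ⟨z, idx, q, hz, hq0, hqlast, hov, hmatch⟩
  have hlen : ∀ j < z, (s (idx j)).length ≤ t.length - (q j - 1) := by
    intro j hj
    have h := congrArg List.length (hmatch j hj)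
    rw [List.length_take, List.length_drop] at h
    exact min_eq_left_iff.mp h
  set P := fun j => q j ≤ r + 1 with hP
  have hP0 : P 0 := by simp [P, hq0]
  set j := Nat.findGreatest P (z - 1) with hjdef
  have hjle : j ≤ z - 1 := Nat.findGreatest_le _
  have hPj : P j := Nat.findGreatest_spec (Nat.zero_le _) hP0
  have hjz : j < z := by omega
  have hm := hmatch j hjz
  have hL := hlen j hjz
  by_cases hcase : j = z - 1
  · have hqj : q j = t.length - (s (idx j)).length + 1 := by rw [hcase]; exact hqlast
    have h1 : 1 ≤ q j := by omega
    have := hno (q j) h1 hPj (idx j) hm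
    omega
  · have hnot : ¬ P (j + 1) :=
      Nat.findGreatest_is_greatest (Nat.lt_succ_self j) (by omega)
    have hnext : q (j + 1) ≤ q j + (s (idx j)).length := by
      simpa using hov (j + 1) (Nat.succ_pos j) (by omega)
    have hgt : r + 1 < q (j + 1) := by
      simp only [P, not_le] at hnot; exact hnot
    by_cases h0 : q j = 0
    · have hm1 : (t.drop (1 - 1)).take (s (idx j)).length = s (idx j) := by
        simpa [h0] using hm
      have := hno 1 le_rfl (by omega) (idx j) hm1
      omega
    · have := hno (q j) (by omega) hPj (idx j) hm
      omega
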